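/- Let p1, ..., p5 be a convex planar pentagon with vertex p_k aligned, i.e., the interior angle at p_k equals π (p_{k-1}, p_k, p_{k+1} are collinear with p_k strictly between). Let v be the unit vector at p_k orthogonal to the line p_{k-1}p_{k+1}, pointing outward from the pentagon. Then for every other vertex p_j (j ≠ k-1, k, k+1), the first-order change of |p_k - p_j| when p_k moves with velocity v is strictly positive: ⟨v, (p_k - p_j)/|p_k - p_j|⟩ > 0. -/

import Mathlib

open RealInnerProductSpace

/-- The signed cross product of the edges at consecutive vertices i, i+1, i+2
of a planar pentagon; nonnegativity everywhere means (weak) convexity in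
counterclockwise cyclic order, and vanishing at i means vertex i+1 is aligned. -/
def crossAt' (p : Fin 5 → EuclideanSpace ℝ (Fin 2)) (i : Fin 5) : ℝ :=
  (p (i+1) 0 - p i 0) * (p (i+2) 1 - p (i+1) 1)
    - (p (i+1) 1 - p i 1) * (p (i+2) 0 - p (i+1) 0)

lemma core_pull (a0 a1 b0 b1 c0 c1 d0 d1 e0 e1 v0 v1 t : ℝ)
    (ht0 : 0 < t) (ht1 : t < 1)
    (hb0 : b0 = (1-t)*a0 + t*c0) (hb1 : b1 = (1-t)*a1 + t*c1)
    (hne : 0 < (c0-a0)^2 + (c1-a1)^2)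
    (horth : v0*(c0-a0) + v1*(c1-a1) = 0)
    (hK : 0 < (c0-b0)*(d1-c1) - (c1-b1)*(d0-c0))
    (hK3 : 0 < (a0-e0)*(b1-a1) - (a1-e1)*(b0-a0))
    (hout : v0*((a0+b0+c0+d0+e0)/5 - b0) + v1*((a1+b1+c1+d1+e1)/5 - b1) < 0) :
    0 < v0*(b0-d0) + v1*(b1-d1) ∧ 0 < v0*(b0-e0) + v1*(b1-e1) := by
  subst hb0; subst hb1
  have hs1 : 0 < 1 - t := by linarith
  have hX : 0 < (c0-a0)*(d1-a1) - (c1-a1)*(d0-a0) := by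
    have h2 : 0 < (1-t) * ((c0-a0)*(d1-a1) - (c1-a1)*(d0-a0)) := by linarith [hK]
    by_contra hc; push_neg at hc; nlinarith
  have hY : 0 < (c0-a0)*(e1-a1) - (c1-a1)*(e0-a0) := by
    have h2 : 0 < t * ((c0-a0)*(e1-a1) - (c1-a1)*(e0-a0)) := by linarith [hK3]
    by_contra hc; push_neg at hc; nlinarith
  set L : ℝ := (v1*(c0-a0) - v0*(c1-a1)) / ((c0-a0)^2 + (c1-a1)^2) with hLdef
  have hv0 : v0 = -(L*(c1-a1)) := by
    rw [hLdef]; field_simp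
    linear_combination (c0-a0) * horth
  have hv1 : v1 = L*(c0-a0) := by
    rw [hLdef]; field_simp
    linear_combination (c1-a1) * horth
  have h5 : v0*((a0+((1-t)*a0+t*c0)+c0+d0+e0)/5 - ((1-t)*a0+t*c0))
      + v1*((a1+((1-t)*a1+t*c1)+c1+d1+e1)/5 - ((1-t)*a1+t*c1))
      = L * (((c0-a0)*(d1-a1) - (c1-a1)*(d0-a0)) + ((c0-a0)*(e1-a1) - (c1-a1)*(e0-a0))) / 5 := by
    rw [hv0, hv1]; ring
  have hL : L < 0 := by
    rw [h5] at hout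
    by_contra hc; push_neg at hc
    nlinarith
  constructor
  · have g1 : v0*(((1-t)*a0+t*c0)-d0) + v1*(((1-t)*a1+t*c1)-d1)
        = -(L*((c0-a0)*(d1-a1) - (c1-a1)*(d0-a0))) := by rw [hv0, hv1]; ring
    rw [g1]; nlinarith
  · have g1 : v0*(((1-t)*a0+t*c0)-e0) + v1*(((1-t)*a1+t*c1)-e1)
        = -(L*((c0-a0)*(e1-a1) - (c1-a1)*(e0-a0))) := by rw [hv0, hv1]; ring
    rw [g1]; nlinarith

lemma inner2 (x y : EuclideanSpace ℝ (Fin 2)) : ⟪x,y⟫ = x 0 * y 0 + x 1 * y 1 := by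
  simp [PiLp.inner_apply, RCLike.inner_apply, Fin.sum_univ_two]
  ring

/-- Let p be a convex planar pentagon (cross products ≥ 0,
strictly positive at every vertex other than k) whose vertex p k is aligned:
p k lies strictly between p (k-1) and p (k+1). Let v be a unit vector
orthogonal to the line p(k-1)p(k+1) pointing outward from the pentagon (away
from the centroid). Then moving p k with velocity v strictly increases, to
first order, the distance from p k to every non-adjacent vertex p j:
⟪v, (p k - p j)/|p k - p j|⟫ > 0. -/
theorem aligned_vertex_outward_pull_increases_diagonals
    (p : Fin 5 → EuclideanSpace ℝ (Fin 2)) (k : Fin 5)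
    (hinj : Function.Injective p)
    (hconv : ∀ i : Fin 5, 0 ≤ crossAt' p i)
    (hstrict : ∀ i : Fin 5, i + 1 ≠ k → 0 < crossAt' p i)
    (haligned : p k ∈ openSegment ℝ (p (k-1)) (p (k+1)))
    (v : EuclideanSpace ℝ (Fin 2)) (hv : ‖v‖ = 1)
    (horth : ⟪v, p (k+1) - p (k-1)⟫ = 0)
    (hout : ⟪v, (5:ℝ)⁻¹ • (∑ i : Fin 5, p i) - p k⟫ < 0) :
    ∀ j : Fin 5, j ≠ k - 1 → j ≠ k → j ≠ k + 1 →
      0 < ⟪v, ‖p k - p j‖⁻¹ • (p k - p j)⟫ := by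

  intro j hj1 hj2 hj3
  have hjc0 : ∀ k j : Fin 5, j ≠ k - 1 → j ≠ k → j ≠ k + 1 → j = k + 2 ∨ j = k + 3 := by decide
  have hjc := hjc0 k j hj1 hj2 hj3
  have idx : ∀ k : Fin 5, k+1 ≠ k ∧ k+3+1 ≠ k ∧ k+3+1 = k-1 ∧ k+3+2 = k ∧ k-1 ≠ k+1 := by decide
  have idx2 : ∀ k : Fin 5, k-1+0 = k-1 ∧ k-1+1 = k ∧ k-1+2 = k+1 ∧ k-1+3 = k+2 ∧ k-1+4 = k+3 := by
    decide
  -- aligned vertex parameter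
  rw [openSegment_eq_image] at haligned
  obtain ⟨t, ht, hb⟩ := haligned
  have hb0 : p k 0 = (1-t) * p (k-1) 0 + t * p (k+1) 0 := by
    have := congrArg (fun z : EuclideanSpace ℝ (Fin 2) => z 0) hb
    simpa using this.symm
  have hb1 : p k 1 = (1-t) * p (k-1) 1 + t * p (k+1) 1 := by
    have := congrArg (fun z : EuclideanSpace ℝ (Fin 2) => z 1) hb
    simpa using this.symm
  -- nondegeneracy
  have hac : p (k-1) ≠ p (k+1) := hinj.ne (idx k).2.2.2.2
  have hne : 0 < (p (k+1) 0 - p (k-1) 0)^2 + (p (k+1) 1 - p (k-1) 1)^2 := by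
    rcases lt_or_eq_of_le (by positivity :
        (0:ℝ) ≤ (p (k+1) 0 - p (k-1) 0)^2 + (p (k+1) 1 - p (k-1) 1)^2) with h | h
    · exact h
    · exfalso; apply hac
      have h0 : p (k+1) 0 - p (k-1) 0 = 0 := by nlinarith [sq_nonneg (p (k+1) 0 - p (k-1) 0), sq_nonneg (p (k+1) 1 - p (k-1) 1)]
      have h1 : p (k+1) 1 - p (k-1) 1 = 0 := by nlinarith [sq_nonneg (p (k+1) 0 - p (k-1) 0), sq_nonneg (p (k+1) 1 - p (k-1) 1)]
      ext i; fin_cases i <;> [skip; skip] <;> simp <;> linarith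
  -- orthogonality in coordinates
  have horth' : v 0 * (p (k+1) 0 - p (k-1) 0) + v 1 * (p (k+1) 1 - p (k-1) 1) = 0 := by
    rw [inner2] at horth; simpa using horth
  -- cross conditions
  have hK := hstrict k (idx k).1
  have hK3 := hstrict (k+3) (idx k).2.1
  rw [crossAt'] at hK hK3
  rw [(idx k).2.2.1, (idx k).2.2.2.1] at hK3
  -- centroid
  have hsum : ∀ m : Fin 2, (∑ i, p i) m
      = p (k-1) m + p k m + p (k+1) m + p (k+2) m + p (k+3) m := by
    intro m
    rw [WithLp.ofLp_sum, Finset.sum_apply]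
    rw [← Fintype.sum_equiv (Equiv.addLeft (k-1)) (fun i => p ((k-1) + i) m) (fun i => p i m)
      (fun i => rfl)]
    rw [Fin.sum_univ_five, (idx2 k).1, (idx2 k).2.1, (idx2 k).2.2.1, (idx2 k).2.2.2.1,
      (idx2 k).2.2.2.2]
  have hout' : v 0 * ((p (k-1) 0 + p k 0 + p (k+1) 0 + p (k+2) 0 + p (k+3) 0)/5 - p k 0)
      + v 1 * ((p (k-1) 1 + p k 1 + p (k+1) 1 + p (k+2) 1 + p (k+3) 1)/5 - p k 1) < 0 := by
    rw [inner2] at hout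
    simp only [PiLp.sub_apply, PiLp.smul_apply, smul_eq_mul, hsum] at hout
    linarith [hout]
  obtain ⟨Hd, He⟩ := core_pull (p (k-1) 0) (p (k-1) 1) (p k 0) (p k 1) (p (k+1) 0) (p (k+1) 1)
    (p (k+2) 0) (p (k+2) 1) (p (k+3) 0) (p (k+3) 1) (v 0) (v 1) t ht.1 ht.2 hb0 hb1 hne horth'
    (by linarith [hK]) (by linarith [hK3]) (by linarith [hout'])
  have hnorm : 0 < ‖p k - p j‖ := by
    rw [norm_pos_iff, sub_ne_zero]
    exact hinj.ne (Ne.symm hj2)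
  rw [real_inner_smul_right]
  apply mul_pos (by positivity)
  rw [inner2]
  simp only [PiLp.sub_apply]
  rcases hjc with h | h <;> subst h
  · linarith [Hd]
  · linarith [He]
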